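/- arXiv:1701.04964 — 2 statements merged into one kernel-verified Lean document; each statement's English description precedes it below -/
import Mathlib

section
/- Let n ≥ 3 be an integer, m > 0, and ψ(x) = (2/(n−2))·log(1 + (m/2)‖x‖^(2−n)) on EuclideanSpace ℝ (Fin n) ∖ {0}. Then for every x ≠ 0 and every unit vector ν, (n−1)/‖x‖ + ⟨∇ψ(x), ν⟩ > 0. -/
open scoped RealInnerProductSpace

/-- For `ψ(x) = (2/(n-2))·log(1 + (m/2)‖x‖^(2-n))`, every `x ≠ 0` and every unit vector `ν`
satisfy `(n-1)/‖x‖ + ⟨∇ψ(x), ν⟩ > 0`: every Euclidean sphere has positive mean curvature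
with respect to the Schwarzschild metric. -/
theorem schwarzschild_sphere_mean_curvature_positive
    (n : ℕ) (hn : 3 ≤ n) (m : ℝ) (hm : 0 < m)
    (ψ : EuclideanSpace ℝ (Fin n) → ℝ)
    (hψ : ∀ x, ψ x = (2 / ((n : ℝ) - 2)) * Real.log (1 + (m / 2) * ‖x‖ ^ ((2 : ℝ) - (n : ℝ)))) :
    ∀ x : EuclideanSpace ℝ (Fin n), x ≠ 0 → ∀ ν : EuclideanSpace ℝ (Fin n), ‖ν‖ = 1 →
      0 < ((n : ℝ) - 1) / ‖x‖ + ⟪gradient ψ x, ν⟫ := by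
  intro x hx ν hν
  have hn3 : (3 : ℝ) ≤ (n : ℝ) := by exact_mod_cast hn
  have hn2 : (n : ℝ) - 2 ≠ 0 := by linarith
  set r : ℝ := ‖x‖ with hr_def
  have hr : 0 < r := norm_pos_iff.mpr hx
  set e : ℝ := ((2 : ℝ) - (n : ℝ)) / 2 with he_def
  set c : ℝ := 2 / ((n : ℝ) - 2) with hc_def
  set t : ℝ := ‖x‖ ^ 2 with ht_def
  have ht : 0 < t := by positivity
  set q : ℝ := t ^ (e - 1) with hq_def
  have hq : 0 < q := Real.rpow_pos_of_pos ht _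
  set D : ℝ := 1 + (m / 2) * t ^ e with hD_def
  have hte : 0 < t ^ e := Real.rpow_pos_of_pos ht _
  have hD : 0 < D := by have := hte; positivity
  -- rewrite ψ as a composition through ‖·‖²
  have hψ' : ψ = (fun s : ℝ => c * Real.log (1 + (m / 2) * s ^ e)) ∘ (fun y => ‖y‖ ^ 2) := by
    funext y
    rw [hψ y]
    simp only [Function.comp]
    have : ‖y‖ ^ ((2 : ℝ) - (n : ℝ)) = ((‖y‖ ^ 2 : ℝ)) ^ e := by
      rw [← Real.rpow_natCast ‖y‖ 2, ← Real.rpow_mul (norm_nonneg y)]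
      congr 1
      rw [he_def]
      push_cast
      ring
    rw [this]
  -- derivative of the outer function at t
  have h1 : HasDerivAt (fun s : ℝ => s ^ e) (e * t ^ (e - 1)) t :=
    Real.hasDerivAt_rpow_const (Or.inl ht.ne')
  have h2 : HasDerivAt (fun s : ℝ => 1 + (m / 2) * s ^ e) ((m / 2) * (e * t ^ (e - 1))) t :=
    (h1.const_mul (m / 2)).const_add 1
  have h3 : HasDerivAt (fun s : ℝ => Real.log (1 + (m / 2) * s ^ e))
      ((m / 2) * (e * t ^ (e - 1)) / D) t := h2.log hD.ne'
  have h4 : HasDerivAt (fun s : ℝ => c * Real.log (1 + (m / 2) * s ^ e))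
      (c * ((m / 2) * (e * t ^ (e - 1)) / D)) t := h3.const_mul c
  have hns : HasFDerivAt (fun y : EuclideanSpace ℝ (Fin n) => ‖y‖ ^ 2)
      (2 • (innerSL ℝ x)) x := (hasStrictFDerivAt_norm_sq x).hasFDerivAt
  have hcomp : HasFDerivAt ψ
      ((c * ((m / 2) * (e * t ^ (e - 1)) / D)) • (2 • (innerSL ℝ x))) x := by
    rw [hψ']
    exact h4.comp_hasFDerivAt x hns
  set s : ℝ := 2 * (c * ((m / 2) * (e * q) / D)) with hs_def
  have hgrad : HasGradientAt ψ (s • x) x := by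
    rw [hasGradientAt_iff_hasFDerivAt]
    have heq : (InnerProductSpace.toDual ℝ (EuclideanSpace ℝ (Fin n))) (s • x)
        = (c * ((m / 2) * (e * t ^ (e - 1)) / D)) • (2 • (innerSL ℝ x)) := by
      ext y
      simp only [InnerProductSpace.toDual_apply_apply, ContinuousLinearMap.smul_apply,
        innerSL_apply_apply, real_inner_smul_left, smul_eq_mul, hs_def, hq_def]
      ring
    rw [heq]
    exact hcomp
  have hgv : gradient ψ x = s • x := hgrad.gradient
  have hs_val : s = -(m * q / D) := by
    rw [hs_def, hc_def, he_def]
    field_simp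
    ring
  have hinner : ⟪gradient ψ x, ν⟫ = s * ⟪x, ν⟫ := by
    rw [hgv, real_inner_smul_left]
  -- Cauchy–Schwarz bound
  have hxs : ⟪x, ν⟫ ≤ r := by
    have := real_inner_le_norm x ν
    rwa [hν, mul_one] at this
  have hsneg : s < 0 := by
    rw [hs_val]
    have : 0 < m * q / D := by positivity
    linarith
  have hlow : s * r ≤ ⟪gradient ψ x, ν⟫ := by
    rw [hinner]
    exact mul_le_mul_of_nonpos_left hxs hsneg.le
  -- arithmetic: q * r * r = r ^ (2 - n), and the key inequality
  have hu : q * r * r = t ^ e := by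
    rw [hq_def, ht_def, ← Real.rpow_natCast ‖x‖ 2, ← Real.rpow_mul (norm_nonneg x),
      ← Real.rpow_mul (norm_nonneg x), ← hr_def]
    rw [show ((2 : ℕ) : ℝ) * e = ((2 : ℕ) : ℝ) * (e - 1) + 1 + 1 by ring,
      Real.rpow_add hr, Real.rpow_add hr, Real.rpow_one]
  have key : m * (q * r * r) < ((n : ℝ) - 1) * D := by
    rw [hu, hD_def]
    nlinarith [mul_pos hm hte, hte]
  have hfin : -(((n : ℝ) - 1) / r) < s * r := by
    rw [hs_val]
    rw [neg_lt, neg_mul, neg_neg]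
    rw [div_mul_eq_mul_div, div_lt_div_iff₀ hD hr]
    calc m * q * r * r = m * (q * r * r) := by ring
    _ < ((n : ℝ) - 1) * D := key
  linarith [hlow, hfin]
end

section
/- Let n ≥ 3 be an integer, c ∈ ℝ, a₀ > 0, and set α = (n−2)/(n−1). Let b : [0,∞) → ℝ be continuous and satisfy b(t) − b(t̄) ≤ α·∫_{t̄}^{t} (b(τ) + c) dτ for all 0 ≤ t̄ ≤ t. Then the function Q(t) = (a₀·e^t)^{−(n−2)/(n−1)}·(b(t) + c) is non-increasing on [0,∞). -/
open Real intervalIntegral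

/-- Abstract form of the monotonicity of `Q(t)`: if `b` is continuous on `[0,∞)` and satisfies
`b(t) - b(t₁) ≤ ((n-2)/(n-1))·∫_{t₁}^{t} (b(τ) + c) dτ` for `0 ≤ t₁ ≤ t`, then with `a₀ > 0`
the function `Q(t) = (a₀e^t)^{-(n-2)/(n-1)}·(b(t) + c)` is non-increasing on `[0,∞)`. -/
theorem Q_monotone_nonincreasing (n : ℕ) (hn : 3 ≤ n) (c : ℝ) (a₀ : ℝ) (ha₀ : 0 < a₀)
    (α : ℝ) (hα : α = ((n : ℝ) - 2) / ((n : ℝ) - 1)) (b : ℝ → ℝ)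
    (hb : ContinuousOn b (Set.Ici (0 : ℝ)))
    (hineq : ∀ t₁ t₂ : ℝ, 0 ≤ t₁ → t₁ ≤ t₂ → b t₂ - b t₁ ≤ α * ∫ τ in t₁..t₂, (b τ + c)) :
    AntitoneOn
      (fun t : ℝ => (a₀ * Real.exp t) ^ (-(((n : ℝ) - 2) / ((n : ℝ) - 1))) * (b t + c))
      (Set.Ici (0 : ℝ)) := by
  have hn3 : (3 : ℝ) ≤ (n : ℝ) := by exact_mod_cast hn
  have hα0 : 0 ≤ α := by
    rw [hα]; apply div_nonneg <;> linarith
  -- extend the integrand continuously to all of ℝ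
  set G : ℝ → ℝ := fun t => b (max t 0) + c with hGdef
  have hGcont : Continuous G := by
    apply Continuous.add _ continuous_const
    exact hb.comp_continuous (continuous_id.max continuous_const) fun x => Set.mem_Ici.mpr (le_max_right _ _)
  have hGeq : ∀ t : ℝ, 0 ≤ t → G t = b t + c := by
    intro t ht; simp [hGdef, max_eq_left ht]
  -- integral inequality for G
  have hGineq : ∀ t₁ t₂ : ℝ, 0 ≤ t₁ → t₁ ≤ t₂ →
      G t₂ - G t₁ ≤ α * ∫ τ in t₁..t₂, G τ := by
    intro t₁ t₂ h1 h12
    have hint : (∫ τ in t₁..t₂, G τ) = ∫ τ in t₁..t₂, (b τ + c) := by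
      apply intervalIntegral.integral_congr
      intro τ hτ
      rw [Set.uIcc_of_le h12] at hτ
      exact hGeq τ (le_trans h1 hτ.1)
    rw [hGeq t₁ h1, hGeq t₂ (le_trans h1 h12), hint]
    have := hineq t₁ t₂ h1 h12
    linarith
  -- core Gronwall step
  have key : ∀ t₁ t₂ : ℝ, 0 ≤ t₁ → t₁ ≤ t₂ →
      Real.exp (-α * t₂) * G t₂ ≤ Real.exp (-α * t₁) * G t₁ := by
    intro t₁ t₂ h1 h12
    set B : ℝ → ℝ := fun t => ∫ τ in t₁..t, G τ with hBdef
    set φ : ℝ → ℝ := fun t => Real.exp (-α * t) * (G t₁ + α * B t) with hφdef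
    have hBderiv : ∀ x : ℝ, HasDerivAt B (G x) x := by
      intro x
      exact intervalIntegral.integral_hasDerivAt_right
        (hGcont.intervalIntegrable _ _)
        (hGcont.stronglyMeasurableAtFilter _ _)
        hGcont.continuousAt
    have hφderiv : ∀ x : ℝ, HasDerivAt φ
        (Real.exp (-α * x) * (-α) * (G t₁ + α * B x) + Real.exp (-α * x) * (α * G x)) x := by
      intro x
      have h1' : HasDerivAt (fun t => Real.exp (-α * t)) (Real.exp (-α * x) * (-α)) x := by
        have := ((hasDerivAt_id x).const_mul (-α)).exp
        simpa using this
      have h2' : HasDerivAt (fun t => G t₁ + α * B t) (α * G x) x :=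
        ((hBderiv x).const_mul α).const_add (G t₁)
      exact h1'.mul h2'
    have hφanti : AntitoneOn φ (Set.Icc t₁ t₂) := by
      apply antitoneOn_of_deriv_nonpos (convex_Icc t₁ t₂)
      · exact fun x _ => ((hφderiv x).continuousAt).continuousWithinAt
      · exact fun x _ => ((hφderiv x).differentiableAt).differentiableWithinAt
      · intro x hx
        rw [interior_Icc] at hx
        rw [(hφderiv x).deriv]
        have hxb : G x - G t₁ ≤ α * B x := by
          have := hGineq t₁ x h1 (le_of_lt hx.1)
          linarith
        have hexp : 0 < Real.exp (-α * x) := Real.exp_pos _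
        nlinarith [mul_nonneg hα0 (sub_nonneg.mpr hxb), mul_nonneg hexp.le (mul_nonneg hα0 (sub_nonneg.mpr hxb))]
    have hstep : Real.exp (-α * t₂) * G t₂ ≤ φ t₂ := by
      have hxb : G t₂ - G t₁ ≤ α * B t₂ := hGineq t₁ t₂ h1 h12
      have hexp : 0 < Real.exp (-α * t₂) := Real.exp_pos _
      simp only [hφdef]
      nlinarith
    have hφ12 : φ t₂ ≤ φ t₁ :=
      hφanti (Set.left_mem_Icc.mpr h12) (Set.right_mem_Icc.mpr h12) h12
    have hφt1 : φ t₁ = Real.exp (-α * t₁) * G t₁ := by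
      simp [hφdef, hBdef, intervalIntegral.integral_same]
    linarith
  -- conclude
  intro t₁ h1 t₂ h2 h12
  simp only
  have hα' : ((n : ℝ) - 2) / ((n : ℝ) - 1) = α := hα.symm
  have hrw : ∀ t : ℝ, (a₀ * Real.exp t) ^ (-(((n : ℝ) - 2) / ((n : ℝ) - 1)))
      = a₀ ^ (-α) * Real.exp (-α * t) := by
    intro t
    rw [hα', Real.mul_rpow ha₀.le (Real.exp_pos t).le, ← Real.exp_mul]
    ring_nf
  rw [hrw, hrw]
  have hGe1 := hGeq t₁ h1
  have hGe2 := hGeq t₂ (le_trans h1 h12)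
  have := key t₁ t₂ h1 h12
  rw [hGe1, hGe2] at this
  have ha' : 0 < a₀ ^ (-α) := Real.rpow_pos_of_pos ha₀ _
  calc a₀ ^ (-α) * Real.exp (-α * t₂) * (b t₂ + c)
      = a₀ ^ (-α) * (Real.exp (-α * t₂) * (b t₂ + c)) := by ring
    _ ≤ a₀ ^ (-α) * (Real.exp (-α * t₁) * (b t₁ + c)) := by
        exact mul_le_mul_of_nonneg_left this ha'.le
    _ = a₀ ^ (-α) * Real.exp (-α * t₁) * (b t₁ + c) := by ring
end
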